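/- arXiv:1503.09108 — 4 statements merged into one kernel-verified Lean document; each statement's English description precedes it below -/
import Mathlib

section
/- Let n ≥ 1, let M ⊆ ℝⁿ be open, let A : M → ℝ^{n+1} be C^∞ with components a¹,…,a^{n+1}, let Q ∈ C^∞(M), and define F : M × ℝ^{n+1} → ℝ by F(u,x) = Σ_{i=1}^{n+1} aⁱ(u)·xᵢ + Q(u), a C^∞ function on an open subset of ℝ^{2n+1} with coordinates (u¹,…,uⁿ, x₁,…,x_{n+1}). Let dA(u) be the (n+1)×n Jacobian matrix of A, let dA^{(i)}(u) be the determinant of the n×n matrix obtained from dA(u) by deleting its i-th row, and let V(u) ∈ ℝ^{2n+1} be the vector whose u-components are 0 and whose xᵢ-component is (−1)^{i+1}·dA^{(i)}(u). Then at every (u,x) ∈ M × ℝ^{n+1}: (i) Hess F(u,x)·V(u) = 0; (ii) adj(Hess F(u,x)) = (−1)ⁿ·V(u)V(u)ᵀ; (iii) U(F)(u,x) = (−1)ⁿ·( det[A(u) | dA(u)] )², where det[A | dA] denotes the determinant of the (n+1)×(n+1) matrix whose first column is A(u) and whose remaining columns are those of dA(u). Consequently U(F) is nowhere zero on M × ℝ^{n+1}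 if and only if det[A | dA] is nowhere zero on M, i.e. if and only if A is a centroaffine immersion. -/
open Matrix

noncomputable def pd1 {ι : Type*} [Fintype ι] [DecidableEq ι]
    (F : (ι → ℝ) → ℝ) (i : ι) (x : ι → ℝ) : ℝ :=
  fderiv ℝ F x (Pi.single i 1)

noncomputable def gradv {ι : Type*} [Fintype ι] [DecidableEq ι]
    (F : (ι → ℝ) → ℝ) (x : ι → ℝ) : ι → ℝ :=
  fun i => pd1 F i x

noncomputable def hessM {ι : Type*} [Fintype ι] [DecidableEq ι]
    (F : (ι → ℝ) → ℝ) (x : ι → ℝ) : Matrix ι ι ℝ :=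
  Matrix.of fun i j => pd1 (pd1 F j) i x

noncomputable def Hdet {ι : Type*} [Fintype ι] [DecidableEq ι]
    (F : (ι → ℝ) → ℝ) (x : ι → ℝ) : ℝ :=
  (hessM F x).det

noncomputable def Nvec {ι : Type*} [Fintype ι] [DecidableEq ι]
    (F : (ι → ℝ) → ℝ) (x : ι → ℝ) : ι → ℝ :=
  (hessM F x).adjugate *ᵥ gradv F x

noncomputable def Uval {ι : Type*} [Fintype ι] [DecidableEq ι]
    (F : (ι → ℝ) → ℝ) (x : ι → ℝ) : ℝ :=
  gradv F x ⬝ᵥ Nvec F x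

/-- The Jacobian matrix of a map `A : ℝ^m → ℝ^k`. -/
noncomputable def Jac {m k : ℕ} (A : (Fin m → ℝ) → (Fin k → ℝ)) (u : Fin m → ℝ) :
    Matrix (Fin k) (Fin m) ℝ :=
  Matrix.of fun i j => fderiv ℝ (fun v => A v i) u (Pi.single j 1)

/-- `dA^{(i)}`: the determinant of the `m×m` matrix obtained from the Jacobian of
`A : ℝ^m → ℝ^{m+1}` by deleting its `i`-th row. -/
noncomputable def minorDel {m : ℕ} (A : (Fin m → ℝ) → (Fin (m+1) → ℝ))
    (i : Fin (m+1)) (u : Fin m → ℝ) : ℝ :=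
  ((Jac A u).submatrix i.succAbove id).det

/-- `det[A | dA]`: the determinant of the `(m+1)×(m+1)` matrix whose first column is
`A(u)` and whose remaining columns are those of the Jacobian of `A`. -/
noncomputable def AdA {m : ℕ} (A : (Fin m → ℝ) → (Fin (m+1) → ℝ)) (u : Fin m → ℝ) : ℝ :=
  (Matrix.of fun i j =>
    (Fin.cons (A u) (fun k i' => Jac A u i' k) : Fin (m+1) → (Fin (m+1) → ℝ)) j i).det

lemma det_zero_special {m s : ℕ} (M : Matrix (Fin m) (Fin m) ℝ)
    (R : Fin (s+1) → Fin m) (hR : Function.Injective R)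
    (C : Fin s → Fin m)
    (h : ∀ t c, M (R t) c ≠ 0 → ∃ u, c = C u) : M.det = 0 := by
  by_contra h0
  have hg : ¬ LinearIndependent ℝ (fun t : Fin (s+1) => (fun u : Fin s => M (R t) (C u))) := by
    intro hli
    have hc := hli.fintype_card_le_finrank
    simp [Module.finrank_fintype_fun_eq_card] at hc
  obtain ⟨φ, hsum, t₀, ht₀⟩ := Fintype.not_linearIndependent_iff.mp hg
  set v : Fin m → ℝ := fun r => ∑ t, φ t * (if R t = r then 1 else 0) with hv
  have key : ∀ c, (v ᵥ* M) c = ∑ t, φ t * M (R t) c := by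
    intro c
    simp only [vecMul, dotProduct, hv, Finset.sum_mul, mul_assoc, ite_mul, one_mul, zero_mul,
      mul_ite, mul_zero]
    rw [Finset.sum_comm]
    refine Finset.sum_congr rfl (fun t _ => ?_)
    rw [Finset.sum_ite_eq Finset.univ (R t) (fun x => φ t * M x c)]
    simp
  have hvM : v ᵥ* M = 0 := by
    funext c
    rw [key c]
    by_cases hc : ∃ u, c = C u
    · obtain ⟨u, rfl⟩ := hc
      have := congrFun hsum u
      simpa using this
    · push_neg at hc
      refine Finset.sum_eq_zero (fun t _ => ?_)
      by_cases hz : M (R t) c = 0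
      · simp [hz]
      · exact absurd (h t c hz) (by push_neg; exact fun u => hc u)
  have hv0 : v = 0 := Matrix.eq_zero_of_vecMul_eq_zero h0 hvM
  apply ht₀
  have := congrFun hv0 (R t₀)
  simp only [hv, Pi.zero_apply] at this
  rw [Finset.sum_congr rfl (fun t _ => by rw [show (if R t = R t₀ then (1:ℝ) else 0) = if t = t₀ then 1 else 0 from by simp [hR.eq_iff]])] at this
  simpa using this

open Fin.NatCast in
lemma rotpow {N : ℕ} (j : ℕ) (i : Fin (N+1)) :
    ((finRotate (N+1))^j) i = i + (j : Fin (N+1)) := by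
  induction j with
  | zero => simp
  | succ j ih =>
    rw [pow_succ']
    simp only [Equiv.Perm.mul_apply, ih, finRotate_succ_apply]
    push_cast
    simp only [Nat.cast_add, Nat.cast_one, add_assoc]

open Fin.NatCast in
lemma sign_sumComm (m : ℕ) :
    Equiv.Perm.sign (Equiv.sumComm (Fin (m+1)) (Fin (m+1))) = (-1)^(m+1) := by
  set e' : (Fin (m+1) ⊕ Fin (m+1)) ≃ Fin (m+1+m+1) :=
    finSumFinEquiv.trans (finCongr (by omega : m+1+(m+1) = m+1+m+1)) with he'
  have key : Equiv.permCongr e' (Equiv.sumComm (Fin (m+1)) (Fin (m+1)))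
      = (finRotate ((m+1+m)+1))^(m+1) := by
    ext k
    rw [rotpow]
    rcases hs : e'.symm k with a | a
    · have hk : k = e' (Sum.inl a) := by rw [← hs, Equiv.apply_symm_apply]
      subst hk
      simp only [Equiv.permCongr_apply, Equiv.symm_apply_apply, Equiv.sumComm_apply,
        Sum.swap_inl]
      simp only [he', Equiv.trans_apply, finSumFinEquiv_apply_left,
        finSumFinEquiv_apply_right, finCongr_apply]
      simp only [Fin.val_add, Fin.val_natCast, Fin.coe_cast, Fin.natAdd_mk, Fin.coe_castAdd]
      have h1 : (m+1) % (m+1+m+1) = m+1 := Nat.mod_eq_of_lt (by omega)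
      rw [h1, Nat.mod_eq_of_lt (by have := a.isLt; omega)]
      have := a.isLt
      simp only [Fin.coe_natAdd, Fin.coe_castAdd]
      omega
    · have hk : k = e' (Sum.inr a) := by rw [← hs, Equiv.apply_symm_apply]
      subst hk
      simp only [Equiv.permCongr_apply, Equiv.symm_apply_apply, Equiv.sumComm_apply,
        Sum.swap_inr]
      simp only [he', Equiv.trans_apply, finSumFinEquiv_apply_left,
        finSumFinEquiv_apply_right, finCongr_apply]
      simp only [Fin.val_add, Fin.val_natCast, Fin.coe_cast, Fin.natAdd_mk, Fin.coe_castAdd]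
      have h1 : (m+1) % (m+1+m+1) = m+1 := Nat.mod_eq_of_lt (by omega)
      have := a.isLt
      simp only [Fin.coe_natAdd, Fin.coe_castAdd]
      rw [h1, show (m+1) + a.val + (m+1) = a.val + (m+1+m+1) from by ring,
        Nat.add_mod_right, Nat.mod_eq_of_lt (by omega)]
  have hsg := Equiv.Perm.sign_permCongr e' (Equiv.sumComm (Fin (m+1)) (Fin (m+1)))
  rw [← hsg, key, map_pow, sign_finRotate, ← pow_mul,
    show (m+1+m+1-1)*(m+1) = (m+1) + 2*(m*(m+1)) from by rw [show m+1+m+1-1 = m+1+m from by omega]; ring, pow_add, pow_mul]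
  norm_num

lemma det_fromBlocks_swap {m : ℕ} (B C D : Matrix (Fin (m+1)) (Fin (m+1)) ℝ) :
    (Matrix.fromBlocks B C D 0).det = (-1:ℝ)^(m+1) * (C.det * D.det) := by
  have h1 : Matrix.fromBlocks B C D (0 : Matrix (Fin (m+1)) (Fin (m+1)) ℝ)
      = (Matrix.fromBlocks C B 0 D).submatrix id (Equiv.sumComm (Fin (m+1)) (Fin (m+1))) := by
    ext (a | a) (b | b) <;> rfl
  rw [h1, Matrix.det_permute' (Equiv.sumComm (Fin (m+1)) (Fin (m+1))) _,
    Matrix.det_fromBlocks_zero₂₁, sign_sumComm]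
  push_cast
  ring


section
variable {m : ℕ}

/-- the reindexing equiv with clean successor shape -/
def ee (m : ℕ) : (Fin (m+1) ⊕ Fin (m+2)) ≃ Fin (m+1+m+1+1) :=
  finSumFinEquiv.trans (finCongr (by omega))

lemma ee_inl (k : Fin (m+1)) : (ee m (Sum.inl k)).val = k.val := by
  simp only [ee, Equiv.trans_apply, finCongr_apply, Fin.coe_cast, finSumFinEquiv_apply_left,
    finSumFinEquiv_apply_right, Fin.coe_castAdd, Fin.coe_natAdd]

lemma ee_inr (i : Fin (m+2)) : (ee m (Sum.inr i)).val = m+1 + i.val := by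
  simp only [ee, Equiv.trans_apply, finCongr_apply, Fin.coe_cast, finSumFinEquiv_apply_left,
    finSumFinEquiv_apply_right, Fin.coe_castAdd, Fin.coe_natAdd]

lemma succAbove_val {N : ℕ} (q : Fin (N+1)) (r : Fin N) :
    (q.succAbove r).val = if r.val < q.val then r.val else r.val + 1 := by
  rcases lt_or_ge (r.castSucc : Fin (N+1)) q with h | h
  · rw [Fin.succAbove_of_castSucc_lt _ _ h]
    simp only [Fin.coe_castSucc]
    rw [if_pos]
    exact h
  · rw [Fin.succAbove_of_le_castSucc _ _ h]
    simp only [Fin.val_succ]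
    rw [if_neg]
    simp only [Fin.le_def, Fin.coe_castSucc] at h
    omega

/-- the Fin n ⊕ Fin n equiv -/
def e2 (m : ℕ) : (Fin (m+1) ⊕ Fin (m+1)) ≃ Fin (m+1+m+1) :=
  finSumFinEquiv.trans (finCongr (by omega))

lemma e2_inl (k : Fin (m+1)) : (e2 m (Sum.inl k)).val = k.val := by
  simp only [e2, Equiv.trans_apply, finCongr_apply, Fin.coe_cast, finSumFinEquiv_apply_left,
    finSumFinEquiv_apply_right, Fin.coe_castAdd, Fin.coe_natAdd]

lemma e2_inr (k : Fin (m+1)) : (e2 m (Sum.inr k)).val = m+1 + k.val := by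
  simp only [e2, Equiv.trans_apply, finCongr_apply, Fin.coe_cast, finSumFinEquiv_apply_left,
    finSumFinEquiv_apply_right, Fin.coe_castAdd, Fin.coe_natAdd]

/-- succAbove compatibility -/
lemma sa1 (i : Fin (m+2)) (s : Fin (m+1) ⊕ Fin (m+1)) :
    (ee m (Sum.inr i)).succAbove (e2 m s) = ee m (Sum.map id i.succAbove s) := by
  apply Fin.ext
  rw [succAbove_val]
  rcases s with a | a
  · simp only [Sum.map_inl, id_eq, e2_inl, ee_inl, ee_inr]
    rw [if_pos (by omega)]
  · simp only [Sum.map_inr, e2_inr, ee_inr]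
    rw [succAbove_val]
    rcases lt_or_ge a.val i.val with h | h
    · rw [if_pos (by omega), if_pos (by omega)]
    · rw [if_neg (by omega), if_neg (by omega)]
      omega

lemma eps_lt (x : Fin (m+1+m+1+1)) (h : x.val < m+1) :
    (ee m).symm x = Sum.inl ⟨x.val, h⟩ := by
  rw [Equiv.symm_apply_eq]
  apply Fin.ext
  rw [ee_inl]

lemma eps_ge (x : Fin (m+1+m+1+1)) (h : m+1 ≤ x.val) :
    (ee m).symm x = Sum.inr ⟨x.val - (m+1), by have := x.isLt; omega⟩ := by
  rw [Equiv.symm_apply_eq]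
  apply Fin.ext
  rw [ee_inr]
  simp only []
  omega

end

noncomputable def wv {m : ℕ} (J : Matrix (Fin (m+2)) (Fin (m+1)) ℝ) :
    (Fin (m+1) ⊕ Fin (m+2)) → ℝ :=
  Sum.elim (fun _ => (0:ℝ)) (fun i => (-1:ℝ)^(i:ℕ) * ((J.submatrix i.succAbove id).det))

lemma adj_entries {m : ℕ} (J : Matrix (Fin (m+2)) (Fin (m+1)) ℝ)
    (H : Matrix (Fin (m+1) ⊕ Fin (m+2)) (Fin (m+1) ⊕ Fin (m+2)) ℝ)
    (h1 : ∀ j i, H (Sum.inl j) (Sum.inr i) = J i j)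
    (h2 : ∀ i j, H (Sum.inr i) (Sum.inl j) = J i j)
    (h3 : ∀ i i', H (Sum.inr i) (Sum.inr i') = 0) :
    ∀ a b, adjugate H a b = (-1:ℝ)^(m+1) * (wv J a * wv J b) := by
  classical
  set ε := (ee m).symm with hε
  set H' : Matrix (Fin (m+1+m+1+1)) (Fin (m+1+m+1+1)) ℝ := H.submatrix ε ε with hH'
  have hadj : ∀ a b, adjugate H a b = adjugate H' (ee m a) (ee m b) := by
    intro a b
    rw [hH', Matrix.adjugate_submatrix_equiv_self ε H]
    simp [Matrix.submatrix_apply, hε]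
  have hent : ∀ x y, H' x y = H (ε x) (ε y) := fun x y => rfl
  -- zero determinant cases
  have hz : ∀ (p q : Fin (m+1+m+1+1)), q.val < m+1 ∨ (p.val < m+1 ∧ m+1 ≤ q.val) →
      det (H'.submatrix q.succAbove p.succAbove) = 0 := by
    intro p q hcase
    rcases hcase with hq | ⟨hp, hq⟩
    · have hR : ∀ t : Fin (m+2), m + t.val < m+1+m+1 := fun t => by have := t.isLt; omega
      refine det_zero_special _ (fun t : Fin (m+2) => (⟨m + t.val, hR t⟩ : Fin (m+1+m+1)))
        (fun t t' htt => ?_) (fun u : Fin (m+1) => (⟨u.val, by have := u.isLt; omega⟩ : Fin (m+1+m+1)))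
        (fun t c hne => ?_)
      · have : m + t.val = m + t'.val := congrArg Fin.val htt
        exact Fin.ext (by omega)
      · simp only [Matrix.submatrix_apply, hent] at hne
        have hval : ((⟨m + t.val, hR t⟩ : Fin (m+1+m+1))).val = m + t.val := rfl
        have hrow : m + 1 ≤ (q.succAbove ⟨m + t.val, hR t⟩).val := by
          rw [succAbove_val, hval]
          split <;> omega
        rw [eps_ge _ hrow] at hne
        have hs := succAbove_val p c
        by_cases hcol : (p.succAbove c).val < m+1
        · have hcv : c.val < m+1 := by split at hs <;> omega
          exact ⟨⟨c.val, hcv⟩, Fin.ext rfl⟩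
        · rw [eps_ge _ (by omega)] at hne
          exact absurd (h3 _ _) hne
    · have hR : ∀ t : Fin (m+1), m + 1 + t.val < m+1+m+1 := fun t => by have := t.isLt; omega
      refine det_zero_special (s := m) _ (fun t : Fin (m+1) => (⟨m + 1 + t.val, hR t⟩ : Fin (m+1+m+1)))
        (fun t t' htt => ?_) (fun u : Fin m => (⟨u.val, by have := u.isLt; omega⟩ : Fin (m+1+m+1)))
        (fun t c hne => ?_)
      · have : m + 1 + t.val = m + 1 + t'.val := congrArg Fin.val htt
        exact Fin.ext (by omega)
      · simp only [Matrix.submatrix_apply, hent] at hne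
        have hval : ((⟨m + 1 + t.val, hR t⟩ : Fin (m+1+m+1))).val = m + 1 + t.val := rfl
        have hrow : m+1 ≤ (q.succAbove ⟨m + 1 + t.val, hR t⟩).val := by
          rw [succAbove_val, hval]
          split <;> omega
        rw [eps_ge _ hrow] at hne
        have hs := succAbove_val p c
        by_cases hcol : (p.succAbove c).val < m+1
        · have hcv : c.val < m := by split at hs <;> omega
          exact ⟨⟨c.val, hcv⟩, Fin.ext rfl⟩
        · rw [eps_ge _ (by omega)] at hne
          exact absurd (h3 _ _) hne
  intro a b
  rw [hadj]
  rw [Matrix.adjugate_fin_succ_eq_det_submatrix]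
  rcases b with k' | i'
  · rw [hz (ee m a) (ee m (Sum.inl k')) (Or.inl (by rw [ee_inl]; exact k'.isLt))]
    simp [wv]
  · rcases a with k | i
    · rw [hz (ee m (Sum.inl k)) (ee m (Sum.inr i')) (Or.inr ⟨by rw [ee_inl]; exact k.isLt, by rw [ee_inr]; omega⟩)]
      simp [wv]
    · -- main case
      have hmat : H'.submatrix (ee m (Sum.inr i')).succAbove (ee m (Sum.inr i)).succAbove
          = (Matrix.fromBlocks (Matrix.of fun j k => H (Sum.inl j) (Sum.inl k))
              (Matrix.of fun k c => J (i.succAbove c) k)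
              (Matrix.of fun r l => J (i'.succAbove r) l) 0).submatrix (e2 m).symm (e2 m).symm := by
        ext r c
        rw [Matrix.submatrix_apply, Matrix.submatrix_apply]
        rw [show r = e2 m ((e2 m).symm r) from (Equiv.apply_symm_apply _ _).symm,
            show c = e2 m ((e2 m).symm c) from (Equiv.apply_symm_apply _ _).symm]
        rw [sa1, sa1, hent]
        simp only [Equiv.symm_apply_apply, hε, Equiv.symm_apply_apply]
        rcases (e2 m).symm r with s | s <;> rcases (e2 m).symm c with t | t <;>
          simp [Matrix.fromBlocks, h1, h2, h3]
      rw [hmat, Matrix.det_submatrix_equiv_self, det_fromBlocks_swap]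
      have hdC : (Matrix.of fun k c => J (i.succAbove c) k).det = (J.submatrix i.succAbove id).det := by
        rw [show (Matrix.of fun k c => J (i.succAbove c) k) = (J.submatrix i.succAbove id)ᵀ from rfl,
          Matrix.det_transpose]
      have hdD : (Matrix.of fun r l => J (i'.succAbove r) l).det = (J.submatrix i'.succAbove id).det := rfl
      rw [hdC, hdD]
      simp only [wv, Sum.elim_inr]
      rw [ee_inr, ee_inr,
        show (m+1+i'.val) + (m+1+i.val) = (i.val + i'.val) + 2*(m+1) from by ring,
        pow_add, pow_mul, pow_add]
      norm_num
      ring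

lemma sum_alt {n : ℕ} (J : Matrix (Fin (n+1)) (Fin n) ℝ) (j : Fin n) :
    ∑ i : Fin (n+1), ((-1:ℝ)^(i:ℕ) * ((J.submatrix i.succAbove id).det)) * J i j = 0 := by
  set K : Matrix (Fin (n+1)) (Fin (n+1)) ℝ :=
    Matrix.of fun r c => Fin.cases (J r j) (fun c' => J r c') c with hK
  have hsub : ∀ i : Fin (n+1), (K.submatrix i.succAbove Fin.succ) = J.submatrix i.succAbove id := by
    intro i; ext r c; simp [hK]
  have hK0 : ∀ i, K i 0 = J i j := fun i => by simp [hK]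
  calc ∑ i : Fin (n+1), ((-1:ℝ)^(i:ℕ) * ((J.submatrix i.succAbove id).det)) * J i j
      = ∑ i : Fin (n+1), (-1:ℝ)^(i:ℕ) * K i 0 * (K.submatrix i.succAbove Fin.succ).det :=
        Finset.sum_congr rfl (fun i _ => by rw [hsub i, hK0 i]; ring)
    _ = K.det := (Matrix.det_succ_column_zero K).symm
    _ = 0 := by
        apply Matrix.det_zero_of_column_eq (i := 0) (j := j.succ) (Fin.succ_ne_zero j).symm
        intro r
        simp [hK]

lemma AdA_gen {n : ℕ} (Av : Fin (n+1) → ℝ) (Jc : Matrix (Fin (n+1)) (Fin n) ℝ) :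
    (Matrix.of fun i j => (Fin.cons Av (fun k i' => Jc i' k) : Fin (n+1) → (Fin (n+1) → ℝ)) j i).det
      = ∑ i : Fin (n+1), (-1:ℝ)^(i:ℕ) * Av i * ((Jc.submatrix i.succAbove id).det) := by
  rw [Matrix.det_succ_column_zero]
  refine Finset.sum_congr rfl (fun i _ => ?_)
  have h1 : (Matrix.of fun i j => (Fin.cons Av (fun k i' => Jc i' k) : Fin (n+1) → (Fin (n+1) → ℝ)) j i) i 0 = Av i := by simp
  have h2 : (Matrix.of fun i j => (Fin.cons Av (fun k i' => Jc i' k) : Fin (n+1) → (Fin (n+1) → ℝ)) j i).submatrix i.succAbove Fin.succ = Jc.submatrix i.succAbove id := by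
    ext r c; simp
  rw [h1, h2]

section Analysis
variable {n : ℕ}

noncomputable def pro (n : ℕ) : ((Fin n ⊕ Fin (n+1)) → ℝ) →L[ℝ] (Fin n → ℝ) :=
  ContinuousLinearMap.pi (fun j => ContinuousLinearMap.proj (Sum.inl j))

lemma pro_apply (z : (Fin n ⊕ Fin (n+1)) → ℝ) : pro n z = fun j => z (Sum.inl j) := rfl

lemma pro_single_inl (j : Fin n) :
    pro n (Pi.single (Sum.inl j : Fin n ⊕ Fin (n+1)) (1:ℝ)) = Pi.single j 1 := by
  funext k
  rw [pro_apply]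
  simp [Pi.single_apply, Sum.inl.injEq]

lemma pro_single_inr (i : Fin (n+1)) :
    pro n (Pi.single (Sum.inr i : Fin n ⊕ Fin (n+1)) (1:ℝ)) = 0 := by
  funext k
  rw [pro_apply]
  simp [Pi.single_apply]

lemma hess_structure (M : Set (Fin n → ℝ)) (hM : IsOpen M)
    (A : (Fin n → ℝ) → (Fin (n+1) → ℝ)) (hA : ContDiffOn ℝ (⊤ : ℕ∞) A M)
    (Q : (Fin n → ℝ) → ℝ) (hQ : ContDiffOn ℝ (⊤ : ℕ∞) Q M)
    (F : ((Fin n ⊕ Fin (n+1)) → ℝ) → ℝ)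
    (hF : F = fun z => (∑ i : Fin (n+1), A (fun j => z (Sum.inl j)) i * z (Sum.inr i))
      + Q (fun j => z (Sum.inl j)))
    (z : (Fin n ⊕ Fin (n+1)) → ℝ)
    (hz : (fun j => z (Sum.inl j)) ∈ M) :
    (∀ i, gradv F z (Sum.inr i) = A (fun j => z (Sum.inl j)) i) ∧
    (∀ i j, hessM F z (Sum.inl j) (Sum.inr i) = Jac A (fun j => z (Sum.inl j)) i j) ∧
    (∀ i j, hessM F z (Sum.inr i) (Sum.inl j) = Jac A (fun j => z (Sum.inl j)) i j) ∧
    (∀ i i', hessM F z (Sum.inr i) (Sum.inr i') = 0) := by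
  classical
  set Ω : Set ((Fin n ⊕ Fin (n+1)) → ℝ) := (pro n) ⁻¹' M with hΩdef
  have hΩo : IsOpen Ω := hM.preimage (pro n).continuous
  have hzΩ : z ∈ Ω := hz
  -- A components are ContDiffOn
  have hAi : ∀ i : Fin (n+1), ContDiffOn ℝ (⊤ : ℕ∞) (fun v => A v i) M := by
    intro i
    exact (ContinuousLinearMap.proj i : ((Fin (n+1)) → ℝ) →L[ℝ] ℝ).contDiff.comp_contDiffOn hA
  -- F is ContDiffOn on Ω
  have hπ : ContDiff ℝ (⊤ : ℕ∞) (fun z : (Fin n ⊕ Fin (n+1)) → ℝ => (fun j => z (Sum.inl j))) :=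
    (pro n).contDiff
  have hmaps : Set.MapsTo (fun z : (Fin n ⊕ Fin (n+1)) → ℝ => (fun j => z (Sum.inl j))) Ω M :=
    fun z hzz => hzz
  have hFC : ContDiffOn ℝ (⊤ : ℕ∞) F Ω := by
    rw [hF]
    apply ContDiffOn.add
    · apply ContDiffOn.sum
      intro i _
      apply ContDiffOn.mul
      · exact (hAi i).comp (hπ.contDiffOn) hmaps
      · exact ((ContinuousLinearMap.proj (Sum.inr i) :
          ((Fin n ⊕ Fin (n+1)) → ℝ) →L[ℝ] ℝ).contDiff.contDiffOn)
    · exact hQ.comp (hπ.contDiffOn) hmaps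
  -- explicit first derivative
  set L : ((Fin n ⊕ Fin (n+1)) → ℝ) → (((Fin n ⊕ Fin (n+1)) → ℝ) →L[ℝ] ℝ) := fun w =>
    (∑ i : Fin (n+1), ((A (pro n w) i) • (ContinuousLinearMap.proj (Sum.inr i) :
        ((Fin n ⊕ Fin (n+1)) → ℝ) →L[ℝ] ℝ)
      + (w (Sum.inr i)) • ((fderiv ℝ (fun v => A v i) (pro n w)).comp (pro n))))
    + (fderiv ℝ Q (pro n w)).comp (pro n) with hL
  have hHasF : ∀ w ∈ Ω, HasFDerivAt F (L w) w := by
    intro w hw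
    have hwM : pro n w ∈ M := hw
    have hQd : HasFDerivAt Q (fderiv ℝ Q (pro n w)) (pro n w) :=
      ((hQ.contDiffAt (hM.mem_nhds hwM)).differentiableAt (by simp)).hasFDerivAt
    have hQc : HasFDerivAt (fun z => Q (pro n z)) ((fderiv ℝ Q (pro n w)).comp (pro n)) w :=
      hQd.comp w (pro n).hasFDerivAt
    have hterm : ∀ i : Fin (n+1), HasFDerivAt (fun z => A (pro n z) i * z (Sum.inr i))
        ((A (pro n w) i) • (ContinuousLinearMap.proj (Sum.inr i) :
          ((Fin n ⊕ Fin (n+1)) → ℝ) →L[ℝ] ℝ)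
         + (w (Sum.inr i)) • ((fderiv ℝ (fun v => A v i) (pro n w)).comp (pro n))) w := by
      intro i
      have hAd : HasFDerivAt (fun v => A v i) (fderiv ℝ (fun v => A v i) (pro n w)) (pro n w) :=
        (((hAi i).contDiffAt (hM.mem_nhds hwM)).differentiableAt (by simp)).hasFDerivAt
      have hAc : HasFDerivAt (fun z => A (pro n z) i)
          ((fderiv ℝ (fun v => A v i) (pro n w)).comp (pro n)) w :=
        hAd.comp w (pro n).hasFDerivAt
      have hXi : HasFDerivAt (fun z : (Fin n ⊕ Fin (n+1)) → ℝ => z (Sum.inr i))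
          (ContinuousLinearMap.proj (Sum.inr i) : ((Fin n ⊕ Fin (n+1)) → ℝ) →L[ℝ] ℝ) w := by
        exact (ContinuousLinearMap.proj (Sum.inr i) : ((Fin n ⊕ Fin (n+1)) → ℝ) →L[ℝ] ℝ).hasFDerivAt
      exact hAc.mul hXi
    have hsum : HasFDerivAt (fun z => ∑ i : Fin (n+1), A (pro n z) i * z (Sum.inr i))
        (∑ i : Fin (n+1), ((A (pro n w) i) • (ContinuousLinearMap.proj (Sum.inr i) :
          ((Fin n ⊕ Fin (n+1)) → ℝ) →L[ℝ] ℝ)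
         + (w (Sum.inr i)) • ((fderiv ℝ (fun v => A v i) (pro n w)).comp (pro n)))) w :=
      HasFDerivAt.fun_sum (fun i _ => hterm i)
    rw [hF, hL]
    exact hsum.add hQc
  have hfd : ∀ w ∈ Ω, fderiv ℝ F w = L w := fun w hw => (hHasF w hw).fderiv
  -- gradient in the x-directions
  have hgrad : ∀ w ∈ Ω, ∀ i, fderiv ℝ F w (Pi.single (Sum.inr i) 1) = A (pro n w) i := by
    intro w hw i
    rw [hfd w hw, hL]
    simp only [ContinuousLinearMap.add_apply, ContinuousLinearMap.coe_sum',
      Finset.sum_apply, ContinuousLinearMap.smul_apply, ContinuousLinearMap.coe_comp',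
      Function.comp_apply, ContinuousLinearMap.proj_apply]
    rw [show (pro n) (Pi.single (Sum.inr i) 1) = 0 from pro_single_inr i]
    simp only [map_zero, smul_zero, add_zero, smul_eq_mul]
    have hps : ∀ x : Fin (n+1), (Pi.single (Sum.inr i) (1:ℝ) : (Fin n ⊕ Fin (n+1)) → ℝ) (Sum.inr x)
        = if x = i then (1:ℝ) else 0 := by
      intro x
      simp [Pi.single_apply, Sum.inr.injEq]
    simp only [hps, mul_zero, add_zero, mul_ite, mul_one]
    simp
  -- second derivative
  have hCz : ContDiffAt ℝ (⊤ : ℕ∞) F z := hFC.contDiffAt (hΩo.mem_nhds hzΩ)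
  have hdf : ContDiffAt ℝ ((⊤ : ℕ∞) : WithTop ℕ∞) (fderiv ℝ F) z :=
    hCz.fderiv_right (by simp)
  have hDdiff : DifferentiableAt ℝ (fderiv ℝ F) z :=
    hdf.differentiableAt (by simp)
  set D := fderiv ℝ (fderiv ℝ F) z with hD
  have hpd : ∀ a b, hessM F z a b = D (Pi.single a 1) (Pi.single b 1) := by
    intro a b
    show pd1 (pd1 F b) a z = _
    unfold pd1
    rw [fderiv_clm_apply hDdiff (differentiableAt_const _)]
    simp [hD]
  have hsymm : IsSymmSndFDerivAt ℝ F z := hCz.isSymmSndFDerivAt (by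
    rw [minSmoothness_of_isRCLikeNormedField]
    exact WithTop.coe_le_coe.mpr le_top)
  have hmix : ∀ (a : Fin n ⊕ Fin (n+1)) (i : Fin (n+1)),
      D (Pi.single a 1) (Pi.single (Sum.inr i) 1)
        = fderiv ℝ (fun v => A v i) (pro n z) (pro n (Pi.single a 1)) := by
    intro a i
    have hloc : (fun w => fderiv ℝ F w (Pi.single (Sum.inr i) 1)) =ᶠ[nhds z]
        (fun w => A (pro n w) i) := by
      filter_upwards [hΩo.mem_nhds hzΩ] with w hw
      exact hgrad w hw i
    have h1 : fderiv ℝ (fun w => fderiv ℝ F w (Pi.single (Sum.inr i) 1)) z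
        = fderiv ℝ (fun w => A (pro n w) i) z := hloc.fderiv_eq
    have h2 : fderiv ℝ (fun w => fderiv ℝ F w (Pi.single (Sum.inr i) 1)) z
        = D.flip (Pi.single (Sum.inr i) 1) := by
      rw [fderiv_clm_apply hDdiff (differentiableAt_const _)]
      simp [hD]
    have hAd : HasFDerivAt (fun v => A v i) (fderiv ℝ (fun v => A v i) (pro n z)) (pro n z) :=
      (((hAi i).contDiffAt (hM.mem_nhds hz)).differentiableAt (by simp)).hasFDerivAt
    have h3 : fderiv ℝ (fun w => A (pro n w) i) z
        = (fderiv ℝ (fun v => A v i) (pro n z)).comp (pro n) :=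
      (hAd.comp z (pro n).hasFDerivAt).fderiv
    calc D (Pi.single a 1) (Pi.single (Sum.inr i) 1)
        = D.flip (Pi.single (Sum.inr i) 1) (Pi.single a 1) := rfl
      _ = (fderiv ℝ (fun w => A (pro n w) i) z) (Pi.single a 1) := by rw [← h2, h1]
      _ = _ := by rw [h3]; rfl
  refine ⟨fun i => hgrad z hzΩ i, fun i j => ?_, fun i j => ?_, fun i i' => ?_⟩
  · rw [show hessM F z (Sum.inl j) (Sum.inr i) = D (Pi.single (Sum.inl j) 1) (Pi.single (Sum.inr i) 1) from hpd _ _,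
      hmix, pro_single_inl]
    rfl
  · rw [show hessM F z (Sum.inr i) (Sum.inl j) = D (Pi.single (Sum.inr i) 1) (Pi.single (Sum.inl j) 1) from hpd _ _,
      show D (Pi.single (Sum.inr i) 1) (Pi.single (Sum.inl j) 1) = D (Pi.single (Sum.inl j) 1) (Pi.single (Sum.inr i) 1) from hsymm.eq _ _,
      hmix, pro_single_inl]
    rfl
  · rw [show hessM F z (Sum.inr i) (Sum.inr i') = D (Pi.single (Sum.inr i) 1) (Pi.single (Sum.inr i') 1) from hpd _ _,
      hmix, pro_single_inr]
    simp
end Analysis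


/-- for `F(u,x) = ⟨A(u),x⟩ + Q(u)` on `M × ℝ^{n+1}` (coordinates indexed
by `Fin n ⊕ Fin (n+1)`), the vector field `V` built from the signed maximal minors of
the Jacobian of `A` lies in the radical of `Hess F`, `adj(Hess F) = (−1)ⁿ V Vᵀ`, and
`U(F) = (−1)ⁿ (det[A | dA])²`; consequently `U(F)` is nowhere zero iff `A` is a
centroaffine immersion. -/
theorem stmt15 (n : ℕ) (hn : 1 ≤ n)
    (M : Set (Fin n → ℝ)) (hM : IsOpen M)
    (A : (Fin n → ℝ) → (Fin (n+1) → ℝ)) (hA : ContDiffOn ℝ (⊤ : ℕ∞) A M)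
    (Q : (Fin n → ℝ) → ℝ) (hQ : ContDiffOn ℝ (⊤ : ℕ∞) Q M)
    (F : ((Fin n ⊕ Fin (n+1)) → ℝ) → ℝ)
    (hF : ∀ z, F z = (∑ i : Fin (n+1), A (fun j => z (Sum.inl j)) i * z (Sum.inr i))
      + Q (fun j => z (Sum.inl j)))
    (V : (Fin n → ℝ) → ((Fin n ⊕ Fin (n+1)) → ℝ))
    (hV : ∀ u, V u = Sum.elim (0 : Fin n → ℝ) (fun i : Fin (n+1) => (-1 : ℝ) ^ (i : ℕ) * minorDel A i u)) :
    (∀ z : (Fin n ⊕ Fin (n+1)) → ℝ, (fun j => z (Sum.inl j)) ∈ M →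
      hessM F z *ᵥ V (fun j => z (Sum.inl j)) = 0 ∧
      (hessM F z).adjugate = ((-1 : ℝ)^n) •
        vecMulVec (V (fun j => z (Sum.inl j))) (V (fun j => z (Sum.inl j))) ∧
      Uval F z = (-1 : ℝ)^n * (AdA A (fun j => z (Sum.inl j)))^2) ∧
    ((∀ z : (Fin n ⊕ Fin (n+1)) → ℝ, (fun j => z (Sum.inl j)) ∈ M → Uval F z ≠ 0)
      ↔ (∀ u ∈ M, AdA A u ≠ 0)) := by
  classical
  obtain ⟨m, rfl⟩ : ∃ m, n = m + 1 := ⟨n - 1, by omega⟩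
  have hFe : F = fun z => (∑ i : Fin (m+1+1), A (fun j => z (Sum.inl j)) i * z (Sum.inr i))
      + Q (fun j => z (Sum.inl j)) := funext hF
  subst hFe
  have key : ∀ z : (Fin (m+1) ⊕ Fin (m+1+1)) → ℝ, (fun j => z (Sum.inl j)) ∈ M →
      (hessM (fun z => (∑ i : Fin (m+1+1), A (fun j => z (Sum.inl j)) i * z (Sum.inr i))
        + Q (fun j => z (Sum.inl j))) z *ᵥ V (fun j => z (Sum.inl j)) = 0 ∧
      (hessM (fun z => (∑ i : Fin (m+1+1), A (fun j => z (Sum.inl j)) i * z (Sum.inr i))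
        + Q (fun j => z (Sum.inl j))) z).adjugate = ((-1 : ℝ)^(m+1)) •
        vecMulVec (V (fun j => z (Sum.inl j))) (V (fun j => z (Sum.inl j))) ∧
      Uval (fun z => (∑ i : Fin (m+1+1), A (fun j => z (Sum.inl j)) i * z (Sum.inr i))
        + Q (fun j => z (Sum.inl j))) z
        = (-1 : ℝ)^(m+1) * (AdA A (fun j => z (Sum.inl j)))^2) := by
    intro z hz
    obtain ⟨hg, hh1, hh2, hh3⟩ := hess_structure M hM A hA Q hQ _ rfl z hz
    set u : Fin (m+1) → ℝ := fun j => z (Sum.inl j) with hu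
    set Fz : ((Fin (m+1) ⊕ Fin (m+1+1)) → ℝ) → ℝ :=
      fun z => (∑ i : Fin (m+1+1), A (fun j => z (Sum.inl j)) i * z (Sum.inr i))
        + Q (fun j => z (Sum.inl j)) with hFz
    have hVw : V u = wv (Jac A u) := by
      rw [hV u]
      rfl
    -- eigenvector claim
    have claim1 : hessM Fz z *ᵥ V u = 0 := by
      funext a
      rw [hVw]
      show ∑ b, hessM Fz z a b * wv (Jac A u) b = 0
      rw [Fintype.sum_sum_type]
      rcases a with k | i
      · have hz1 : ∀ j : Fin (m+1), hessM Fz z (Sum.inl k) (Sum.inl j) * wv (Jac A u) (Sum.inl j) = 0 := by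
          intro j; simp [wv]
        rw [Finset.sum_congr rfl (fun j _ => hz1 j), Finset.sum_const_zero, zero_add]
        have hz2 : ∀ i : Fin (m+1+1), hessM Fz z (Sum.inl k) (Sum.inr i) * wv (Jac A u) (Sum.inr i)
            = ((-1:ℝ)^(i:ℕ) * (((Jac A u).submatrix i.succAbove id).det)) * Jac A u i k := by
          intro i
          rw [hh1 i k]
          show Jac A u i k * ((-1:ℝ)^(i:ℕ) * (((Jac A u).submatrix i.succAbove id).det)) = _
          ring
        rw [Finset.sum_congr rfl (fun i _ => hz2 i)]
        exact sum_alt (Jac A u) k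
      · have hz1 : ∀ j : Fin (m+1), hessM Fz z (Sum.inr i) (Sum.inl j) * wv (Jac A u) (Sum.inl j) = 0 := by
          intro j; simp [wv]
        have hz2 : ∀ i' : Fin (m+1+1), hessM Fz z (Sum.inr i) (Sum.inr i') * wv (Jac A u) (Sum.inr i') = 0 := by
          intro i'; rw [hh3 i i']; ring
        rw [Finset.sum_congr rfl (fun j _ => hz1 j), Finset.sum_congr rfl (fun i' _ => hz2 i')]
        simp
    -- adjugate claim
    have claim2 : (hessM Fz z).adjugate = ((-1 : ℝ)^(m+1)) • vecMulVec (V u) (V u) := by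
      have hadj := adj_entries (Jac A u) (hessM Fz z)
        (fun j i => hh1 i j) (fun i j => hh2 i j) (fun i i' => hh3 i i')
      ext a b
      rw [hadj a b, hVw]
      simp only [Matrix.smul_apply, Matrix.vecMulVec_apply, smul_eq_mul]
    -- U claim
    have claim3 : Uval Fz z = (-1 : ℝ)^(m+1) * (AdA A u)^2 := by
      have hs : ∑ b, V u b * gradv Fz z b = AdA A u := by
        rw [Fintype.sum_sum_type]
        have hz1 : ∀ j : Fin (m+1), V u (Sum.inl j) * gradv Fz z (Sum.inl j) = 0 := by
          intro j
          rw [hV u]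
          show (0 : Fin (m+1) → ℝ) j * _ = 0
          simp
        have hz2 : ∀ i : Fin (m+1+1), V u (Sum.inr i) * gradv Fz z (Sum.inr i)
            = (-1:ℝ)^(i:ℕ) * A u i * (((Jac A u).submatrix i.succAbove id).det) := by
          intro i
          rw [hV u, hg i]
          show ((-1:ℝ)^(i:ℕ) * (((Jac A u).submatrix i.succAbove id).det)) * A u i = _
          ring
        rw [Finset.sum_congr rfl (fun j _ => hz1 j), Finset.sum_const_zero, zero_add,
          Finset.sum_congr rfl (fun i _ => hz2 i)]
        exact (AdA_gen (A u) (Jac A u)).symm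
      have hmv : (hessM Fz z).adjugate *ᵥ gradv Fz z
          = fun a => (-1:ℝ)^(m+1) * (V u a * (∑ b, V u b * gradv Fz z b)) := by
        funext a
        rw [claim2]
        show ∑ b, (((-1 : ℝ)^(m+1)) • vecMulVec (V u) (V u)) a b * gradv Fz z b = _
        have hterm : ∀ b, (((-1 : ℝ)^(m+1)) • vecMulVec (V u) (V u)) a b * gradv Fz z b
            = (-1:ℝ)^(m+1) * (V u a * (V u b * gradv Fz z b)) := by
          intro b
          simp only [Matrix.smul_apply, Matrix.vecMulVec_apply, smul_eq_mul]
          ring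
        rw [Finset.sum_congr rfl (fun b _ => hterm b), ← Finset.mul_sum, ← Finset.mul_sum]
      calc Uval Fz z
          = ∑ a, gradv Fz z a * ((hessM Fz z).adjugate *ᵥ gradv Fz z) a := rfl
        _ = ∑ a, gradv Fz z a * ((-1:ℝ)^(m+1) * (V u a * (∑ b, V u b * gradv Fz z b))) := by
            rw [hmv]
        _ = ∑ a, ((-1:ℝ)^(m+1) * (∑ b, V u b * gradv Fz z b)) * (V u a * gradv Fz z a) := by
            refine Finset.sum_congr rfl (fun a _ => ?_)
            ring
        _ = ((-1:ℝ)^(m+1) * (∑ b, V u b * gradv Fz z b)) * (∑ a, V u a * gradv Fz z a) := by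
            rw [← Finset.mul_sum]
        _ = (-1 : ℝ)^(m+1) * (AdA A u)^2 := by
            rw [hs]
            ring
    exact ⟨claim1, claim2, claim3⟩
  constructor
  · intro z hz
    exact key z hz
  · constructor
    · intro h u hu
      have h1 := (key (Sum.elim u 0) hu).2.2
      have h2 := h (Sum.elim u 0) hu
      rw [h1] at h2
      intro hAdA
      apply h2
      have : AdA A (fun j => Sum.elim u (0 : Fin (m+1+1) → ℝ) (Sum.inl j)) = 0 := hAdA
      rw [this]
      ring
    · intro h z hz
      rw [(key z hz).2.2]
      have := h _ hz
      positivity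
end

section
/- Let n ≥ 1, let M ⊆ ℝⁿ be open, let A : M → ℝ^{n+1} be C^∞, let Q ∈ C^∞(M), and define F(u,x) = Σ_{i=1}^{n+1} aⁱ(u)·xᵢ + Q(u) on M × ℝ^{n+1} ⊆ ℝ^{2n+1}, where a¹,…,a^{n+1} are the components of A. Let V(u) ∈ ℝ^{2n+1} be the vector whose u-components are 0 and whose xᵢ-component is (−1)^{i+1}·dA^{(i)}(u), where dA^{(i)}(u) is the determinant of the n×n matrix obtained from the Jacobian dA(u) by deleting its i-th row. Then A is an immersion (dA(u) has rank n for all u ∈ M) if and only if Hess F(u,x) has rank 2n at every point (u,x) ∈ M × ℝ^{n+1}; and in that case, for every (u,x), the kernel of Hess F(u,x) is the line spanned by V(u). -/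
open Matrix
open Module Submodule

variable {n : ℕ}

/-- The generalized cross product of the columns of `J`. -/
noncomputable def crossVec (J : Matrix (Fin (n+1)) (Fin n) ℝ) : Fin (n+1) → ℝ :=
  fun i => (-1 : ℝ)^(i:ℕ) * (J.submatrix i.succAbove id).det

lemma det_cons_eq (J : Matrix (Fin (n+1)) (Fin n) ℝ) (y : Fin (n+1) → ℝ) :
    (Matrix.of fun i j => Fin.cons (y i) (J i) j).det
      = ∑ i, y i * crossVec J i := by
  rw [Matrix.det_succ_column_zero]
  refine Finset.sum_congr rfl fun i _ => ?_
  have h2 : ((Matrix.of fun i j => Fin.cons (y i) (J i) j).submatrix i.succAbove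
      Fin.succ) = J.submatrix i.succAbove id := by
    ext i' j; simp
  rw [h2]
  simp [crossVec]
  ring

lemma crossVec_orth (J : Matrix (Fin (n+1)) (Fin n) ℝ) (k : Fin n) :
    ∑ i, J i k * crossVec J i = 0 := by
  rw [← det_cons_eq J (fun i => J i k)]
  apply Matrix.det_zero_of_column_eq (i := 0) (j := k.succ)
  · exact (Fin.succ_ne_zero k).symm
  · intro i; simp

lemma crossVec_ne_zero (J : Matrix (Fin (n+1)) (Fin n) ℝ) (hJ : J.rank = n) :
    crossVec J ≠ 0 := by
  -- columns of J are linearly independent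
  have hcols : LinearIndependent ℝ (fun k : Fin n => (fun i => J i k)) := by
    rw [linearIndependent_iff_card_eq_finrank_span]
    have : LinearMap.range J.mulVecLin = span ℝ (Set.range Jᵀ) := J.range_mulVecLin
    have hr : finrank ℝ (span ℝ (Set.range Jᵀ) : Submodule ℝ (Fin (n+1) → ℝ)) = n := by
      rw [← this]; exact hJ
    have : Set.range (fun k : Fin n => (fun i => J i k)) = Set.range Jᵀ := by
      ext v; constructor <;> rintro ⟨k, rfl⟩ <;> exact ⟨k, rfl⟩
    rw [Set.finrank, this, hr, Fintype.card_fin]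
  -- pick y outside the span of the columns
  obtain ⟨y, hy⟩ : ∃ y, y ∉ span ℝ (Set.range fun k : Fin n => (fun i => J i k)) := by
    by_contra h
    push_neg at h
    have : span ℝ (Set.range fun k : Fin n => (fun i => J i k)) = ⊤ :=
      eq_top_iff.2 fun v _ => h v
    have h1 := finrank_span_eq_card hcols
    rw [this] at h1
    simp only [finrank_top, finrank_pi, Fintype.card_fin] at h1
    omega
  have hli : LinearIndependent ℝ
      (Fin.cons (α := fun _ : Fin (n+1) => Fin (n+1) → ℝ) y
        (fun k : Fin n => (fun i => J i k))) :=
    linearIndependent_fin_cons.2 ⟨hcols, hy⟩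
  -- the (n+1)×(n+1) matrix [y | J] has nonzero determinant
  set Mx : Matrix (Fin (n+1)) (Fin (n+1)) ℝ := Matrix.of fun i (j : Fin (n+1)) => Fin.cons (α := fun _ : Fin (n+1) => ℝ) (y i) (J i) j with hMx
  have hdet : Mx.det ≠ 0 := by
    intro h0
    obtain ⟨v, hv, hmv⟩ := Matrix.exists_mulVec_eq_zero_iff.2 h0
    apply hv
    have := Fintype.linearIndependent_iff.1 hli v ?_
    · funext j
      exact this j
    · funext i
      have := congrFun hmv i
      simpa [Matrix.mulVec, dotProduct, Finset.sum_apply, mul_comm,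
        Fin.sum_univ_succ, Mx] using this
  intro hc
  rw [det_cons_eq, hc] at hdet
  simp at hdet

lemma ker_transpose_eq (J : Matrix (Fin (n+1)) (Fin n) ℝ) (hJ : J.rank = n) :
    LinearMap.ker (Jᵀ.mulVecLin) = span ℝ {crossVec J} := by
  have hc0 : crossVec J ≠ 0 := crossVec_ne_zero J hJ
  have hmem : crossVec J ∈ LinearMap.ker (Jᵀ.mulVecLin) := by
    rw [LinearMap.mem_ker]
    funext k
    simpa [Matrix.mulVecLin, Matrix.mulVec, dotProduct, Matrix.transpose]
      using crossVec_orth J k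
  have hle : span ℝ {crossVec J} ≤ LinearMap.ker (Jᵀ.mulVecLin) :=
    span_le.2 (by simpa using hmem)
  have hrk : Jᵀ.rank = n := by rw [Matrix.rank_transpose]; exact hJ
  have hker : finrank ℝ (LinearMap.ker (Jᵀ.mulVecLin)) = 1 := by
    have := LinearMap.finrank_range_add_finrank_ker (Jᵀ.mulVecLin)
    rw [show finrank ℝ (Fin (n+1) → ℝ) = n + 1 by simp] at this
    have h2 : finrank ℝ (LinearMap.range Jᵀ.mulVecLin) = n := hrk
    omega
  symm
  apply Submodule.eq_of_le_of_finrank_le hle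
  rw [hker, finrank_span_singleton hc0]

lemma ker_J_eq_bot (J : Matrix (Fin (n+1)) (Fin n) ℝ) (hJ : J.rank = n) :
    ∀ v, J *ᵥ v = 0 → v = 0 := by
  intro v hv
  have hker : finrank ℝ (LinearMap.ker (J.mulVecLin)) = 0 := by
    have := LinearMap.finrank_range_add_finrank_ker (J.mulVecLin)
    rw [show finrank ℝ (Fin n → ℝ) = n by simp] at this
    have h2 : finrank ℝ (LinearMap.range J.mulVecLin) = n := hJ
    omega
  have : LinearMap.ker (J.mulVecLin) = ⊥ :=
    Submodule.finrank_eq_zero.1 hker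
  have hv' : v ∈ LinearMap.ker (J.mulVecLin) := by
    rw [LinearMap.mem_ker]; exact hv
  rw [this] at hv'
  simpa using hv'

lemma sum_elim_ne_zero {c : Fin (n+1) → ℝ} (hc : c ≠ 0) :
    (Sum.elim (0 : Fin n → ℝ) c : (Fin n ⊕ Fin (n+1)) → ℝ) ≠ 0 := by
  intro h
  apply hc
  funext i
  exact congrFun h (Sum.inr i)

noncomputable def extMap : (Fin (n+1) → ℝ) →ₗ[ℝ] ((Fin n ⊕ Fin (n+1)) → ℝ) where
  toFun x := Sum.elim 0 x
  map_add' x y := by funext j; cases j <;> simp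
  map_smul' c x := by funext j; cases j <;> simp

lemma hess_block
    (J : Matrix (Fin (n+1)) (Fin n) ℝ)
    (H : Matrix (Fin n ⊕ Fin (n+1)) (Fin n ⊕ Fin (n+1)) ℝ)
    (h1 : ∀ k i, H (Sum.inl k) (Sum.inr i) = J i k)
    (h2 : ∀ i i', H (Sum.inr i) (Sum.inr i') = 0)
    (h3 : ∀ i k, H (Sum.inr i) (Sum.inl k) = J i k) :
    (J.rank = n → H.rank = 2*n) ∧ (H.rank = 2*n → J.rank = n) ∧
    (J.rank = n → ∀ w, (H *ᵥ w = 0 ↔ ∃ c : ℝ, w = c • Sum.elim (0 : Fin n → ℝ) (crossVec J))) := by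
  -- mulVec component formulas
  have hmvl : ∀ w k, (H *ᵥ w) (Sum.inl k)
      = (∑ k', H (Sum.inl k) (Sum.inl k') * w (Sum.inl k'))
        + ∑ i, J i k * w (Sum.inr i) := by
    intro w k
    rw [Matrix.mulVec, dotProduct, Fintype.sum_sum_type]
    congr 1
    exact Finset.sum_congr rfl fun i _ => by rw [h1]
  have hmvr : ∀ w i, (H *ᵥ w) (Sum.inr i) = ∑ k, J i k * w (Sum.inl k) := by
    intro w i
    rw [Matrix.mulVec, dotProduct, Fintype.sum_sum_type]
    have : (∑ i', H (Sum.inr i) (Sum.inr i') * w (Sum.inr i')) = 0 := by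
      simp [h2]
    rw [this, add_zero]
    exact Finset.sum_congr rfl fun k _ => by rw [h3]
  -- kernel characterization
  have hker : ∀ (hJ : J.rank = n) w,
      (H *ᵥ w = 0 ↔ ∃ c : ℝ, w = c • Sum.elim (0 : Fin n → ℝ) (crossVec J)) := by
    intro hJ w
    constructor
    · intro hw
      have hinl : (fun k => w (Sum.inl k)) = 0 := by
        apply ker_J_eq_bot J hJ
        funext i
        have := congrFun hw (Sum.inr i)
        rw [hmvr] at this
        simpa [Matrix.mulVec, dotProduct] using this
      have hJt : Jᵀ *ᵥ (fun i => w (Sum.inr i)) = 0 := by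
        funext k
        have := congrFun hw (Sum.inl k)
        rw [hmvl] at this
        have hz : (∑ k', H (Sum.inl k) (Sum.inl k') * w (Sum.inl k')) = 0 := by
          apply Finset.sum_eq_zero
          intro k' _
          have : w (Sum.inl k') = 0 := congrFun hinl k'
          rw [this, mul_zero]
        rw [hz, zero_add] at this
        simpa [Matrix.mulVec, dotProduct, Matrix.transpose] using this
      have : (fun i => w (Sum.inr i)) ∈ LinearMap.ker (Jᵀ.mulVecLin) := by
        rw [LinearMap.mem_ker]; exact hJt
      rw [ker_transpose_eq J hJ, Submodule.mem_span_singleton] at this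
      obtain ⟨c, hc⟩ := this
      refine ⟨c, ?_⟩
      funext j
      cases j with
      | inl k => simpa using (congrFun hinl k).trans (by simp)
      | inr i => simpa using (congrFun hc i).symm
    · rintro ⟨c, rfl⟩
      funext j
      cases j with
      | inl k =>
        rw [hmvl]
        have hz : (∑ k', H (Sum.inl k) (Sum.inl k')
            * (c • Sum.elim (0 : Fin n → ℝ) (crossVec J)) (Sum.inl k')) = 0 := by
          apply Finset.sum_eq_zero; intro k' _; simp
        rw [hz, zero_add]
        have : (∑ i, J i k * (c • Sum.elim (0 : Fin n → ℝ) (crossVec J)) (Sum.inr i))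
            = c * ∑ i, J i k * crossVec J i := by
          rw [Finset.mul_sum]
          exact Finset.sum_congr rfl fun i _ => by simp; ring
        rw [this, crossVec_orth, mul_zero]
        rfl
      | inr i =>
        rw [hmvr]
        simp
  refine ⟨?_, ?_, hker⟩
  · -- rank J = n → rank H = 2n
    intro hJ
    have hkerH : LinearMap.ker H.mulVecLin = span ℝ {Sum.elim (0 : Fin n → ℝ) (crossVec J)} := by
      ext w
      rw [LinearMap.mem_ker, Submodule.mem_span_singleton, Matrix.mulVecLin_apply,
        hker hJ w]
      constructor
      · rintro ⟨c, rfl⟩; exact ⟨c, rfl⟩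
      · rintro ⟨c, rfl⟩; exact ⟨c, rfl⟩
    have hne : (Sum.elim (0 : Fin n → ℝ) (crossVec J) : (Fin n ⊕ Fin (n+1)) → ℝ) ≠ 0 :=
      sum_elim_ne_zero (crossVec_ne_zero J hJ)
    have h1' : finrank ℝ (LinearMap.ker H.mulVecLin) = 1 := by
      rw [hkerH, finrank_span_singleton hne]
    have := LinearMap.finrank_range_add_finrank_ker H.mulVecLin
    rw [h1', show finrank ℝ ((Fin n ⊕ Fin (n+1)) → ℝ) = 2*n+1 by
      simp [finrank_pi]; ring] at this
    have h2' : H.rank = finrank ℝ (LinearMap.range H.mulVecLin) := rfl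
    omega
  · -- rank H = 2n → rank J = n
    intro hH
    have hkerH : finrank ℝ (LinearMap.ker H.mulVecLin) = 1 := by
      have := LinearMap.finrank_range_add_finrank_ker H.mulVecLin
      rw [show finrank ℝ ((Fin n ⊕ Fin (n+1)) → ℝ) = 2*n+1 by
        simp [finrank_pi]; ring] at this
      have h2' : H.rank = finrank ℝ (LinearMap.range H.mulVecLin) := rfl
      omega
    have hmap : Submodule.map (extMap (n := n)) (LinearMap.ker Jᵀ.mulVecLin)
        ≤ LinearMap.ker H.mulVecLin := by
      rintro w ⟨x, hx, rfl⟩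
      simp only [SetLike.mem_coe, LinearMap.mem_ker, Matrix.mulVecLin_apply] at hx
      rw [LinearMap.mem_ker, Matrix.mulVecLin_apply]
      funext j
      cases j with
      | inl k =>
        rw [hmvl]
        have hz : (∑ k', H (Sum.inl k) (Sum.inl k')
            * (extMap (n := n) x) (Sum.inl k')) = 0 := by
          apply Finset.sum_eq_zero; intro k' _
          simp [extMap]
        rw [hz, zero_add]
        have := congrFun hx k
        simpa [Matrix.mulVec, dotProduct, Matrix.transpose, extMap] using this
      | inr i =>
        rw [hmvr]
        simp [extMap]
    have hinj : Function.Injective (extMap (n := n)) := by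
      intro x y hxy
      funext i
      exact congrFun hxy (Sum.inr i)
    have heq : finrank ℝ (LinearMap.ker Jᵀ.mulVecLin)
        = finrank ℝ (Submodule.map (extMap (n := n)) (LinearMap.ker Jᵀ.mulVecLin)) :=
      (Submodule.equivMapOfInjective _ hinj _).finrank_eq
    have hle : finrank ℝ (Submodule.map (extMap (n := n)) (LinearMap.ker Jᵀ.mulVecLin))
        ≤ 1 :=
      le_trans (Submodule.finrank_mono hmap) (le_of_eq hkerH)
    have hrn := LinearMap.finrank_range_add_finrank_ker Jᵀ.mulVecLin
    rw [show finrank ℝ (Fin (n+1) → ℝ) = n+1 by simp] at hrn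
    have h2' : Jᵀ.rank = finrank ℝ (LinearMap.range Jᵀ.mulVecLin) := rfl
    have h3' : Jᵀ.rank = J.rank := Matrix.rank_transpose J
    have h4' : J.rank ≤ n := by
      simpa using J.rank_le_card_width
    omega

variable {n : ℕ}

/-- projection onto the `u` coordinates, as a continuous linear map -/
noncomputable def projL (n : ℕ) : (((Fin n) ⊕ (Fin (n+1))) → ℝ) →L[ℝ] (Fin n → ℝ) :=
  ContinuousLinearMap.pi (fun j => ContinuousLinearMap.proj (Sum.inl j))

@[simp] lemma projL_apply (z : ((Fin n) ⊕ (Fin (n+1))) → ℝ) (j : Fin n) :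
    projL n z j = z (Sum.inl j) := rfl

lemma projL_single_inl (k : Fin n) :
    projL n (Pi.single (Sum.inl k) 1) = Pi.single k (1:ℝ) := by
  funext j
  simp [Pi.single_apply]

lemma projL_single_inr (i : Fin (n+1)) :
    projL n (Pi.single (Sum.inr i) 1) = 0 := by
  funext j
  simp [Pi.single_apply]

section main
variable {M : Set (Fin n → ℝ)} (hM : IsOpen M)
  {A : (Fin n → ℝ) → (Fin (n+1) → ℝ)} (hA : ContDiffOn ℝ (⊤ : ℕ∞) A M)
  {Q : (Fin n → ℝ) → ℝ} (hQ : ContDiffOn ℝ (⊤ : ℕ∞) Q M)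
  {F : ((Fin n ⊕ Fin (n+1)) → ℝ) → ℝ}
  (hF : ∀ z, F z = (∑ i : Fin (n+1), A (fun j => z (Sum.inl j)) i * z (Sum.inr i))
      + Q (fun j => z (Sum.inl j)))

include hM hA hQ hF

lemma hasFDerivAt_F (z : (Fin n ⊕ Fin (n+1)) → ℝ) (hz : (fun j => z (Sum.inl j)) ∈ M) :
    HasFDerivAt F
      ((∑ i : Fin (n+1),
          ((A (fun j => z (Sum.inl j)) i) • ContinuousLinearMap.proj (Sum.inr i)
            + (z (Sum.inr i)) •
              ((fderiv ℝ (fun v => A v i) (fun j => z (Sum.inl j))).comp (projL n))))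
        + (fderiv ℝ Q (fun j => z (Sum.inl j))).comp (projL n)) z := by
  have hFe : F = fun z => (∑ i : Fin (n+1), A (fun j => z (Sum.inl j)) i * z (Sum.inr i))
      + Q (fun j => z (Sum.inl j)) := funext hF
  rw [hFe]
  set u : Fin n → ℝ := fun j => z (Sum.inl j) with hu
  have hπ : HasFDerivAt (fun z' : (Fin n ⊕ Fin (n+1)) → ℝ => (fun j => z' (Sum.inl j)))
      (projL n) z := (projL n).hasFDerivAt
  have hAu : ContDiffAt ℝ (⊤ : ℕ∞) A u := hA.contDiffAt (hM.mem_nhds hz)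
  have hAd : DifferentiableAt ℝ A u := hAu.differentiableAt (by simp)
  have hQd : DifferentiableAt ℝ Q u :=
    (hQ.contDiffAt (hM.mem_nhds hz)).differentiableAt (by simp)
  refine HasFDerivAt.add (HasFDerivAt.fun_sum fun i _ => ?_) ?_
  · have hAi : HasFDerivAt (fun v => A v i) (fderiv ℝ (fun v => A v i) u) u :=
      ((differentiableAt_pi.1 hAd) i).hasFDerivAt
    have hc : HasFDerivAt (fun z' : (Fin n ⊕ Fin (n+1)) → ℝ => A (fun j => z' (Sum.inl j)) i)
        ((fderiv ℝ (fun v => A v i) u).comp (projL n)) z := by have := hAi.comp z hπ; exact this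
    have hd : HasFDerivAt (fun z' : (Fin n ⊕ Fin (n+1)) → ℝ => z' (Sum.inr i))
        (ContinuousLinearMap.proj (R := ℝ) (φ := fun _ : Fin n ⊕ Fin (n+1) => ℝ) (Sum.inr i)) z :=
      hasFDerivAt_apply (𝕜 := ℝ) (Sum.inr i) z
    exact hc.mul hd
  · exact (hQd.hasFDerivAt).comp z hπ

lemma pd1_inr (z : (Fin n ⊕ Fin (n+1)) → ℝ) (hz : (fun j => z (Sum.inl j)) ∈ M)
    (i : Fin (n+1)) :
    pd1 F (Sum.inr i) z = A (fun j => z (Sum.inl j)) i := by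
  rw [pd1, (hasFDerivAt_F hM hA hQ hF z hz).fderiv]
  simp [projL_single_inr, Pi.single_apply]

lemma pd1_inl (z : (Fin n ⊕ Fin (n+1)) → ℝ) (hz : (fun j => z (Sum.inl j)) ∈ M)
    (k : Fin n) :
    pd1 F (Sum.inl k) z =
      (∑ i : Fin (n+1),
        fderiv ℝ (fun v => A v i) (fun j => z (Sum.inl j)) (Pi.single k 1) * z (Sum.inr i))
      + fderiv ℝ Q (fun j => z (Sum.inl j)) (Pi.single k 1) := by
  rw [pd1, (hasFDerivAt_F hM hA hQ hF z hz).fderiv]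
  simp [projL_single_inl, Pi.single_apply, mul_comm]

end main

section main2
variable {M : Set (Fin n → ℝ)} (hM : IsOpen M)
  {A : (Fin n → ℝ) → (Fin (n+1) → ℝ)} (hA : ContDiffOn ℝ (⊤ : ℕ∞) A M)
  {Q : (Fin n → ℝ) → ℝ} (hQ : ContDiffOn ℝ (⊤ : ℕ∞) Q M)
  {F : ((Fin n ⊕ Fin (n+1)) → ℝ) → ℝ}
  (hF : ∀ z, F z = (∑ i : Fin (n+1), A (fun j => z (Sum.inl j)) i * z (Sum.inr i))
      + Q (fun j => z (Sum.inl j)))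

include hM hA hQ hF

lemma mem_nhds_Omega (z : (Fin n ⊕ Fin (n+1)) → ℝ) (hz : (fun j => z (Sum.inl j)) ∈ M) :
    {z' : (Fin n ⊕ Fin (n+1)) → ℝ | (fun j => z' (Sum.inl j)) ∈ M} ∈ nhds z := by
  have hcont : Continuous (fun z' : (Fin n ⊕ Fin (n+1)) → ℝ => (fun j => z' (Sum.inl j))) :=
    (projL n).continuous
  exact (hM.preimage hcont).mem_nhds hz

lemma fderiv_pd1_inr (z : (Fin n ⊕ Fin (n+1)) → ℝ) (hz : (fun j => z (Sum.inl j)) ∈ M)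
    (i : Fin (n+1)) :
    fderiv ℝ (pd1 F (Sum.inr i)) z
      = (fderiv ℝ (fun v => A v i) (fun j => z (Sum.inl j))).comp (projL n) := by
  have hev : pd1 F (Sum.inr i) =ᶠ[nhds z] fun z' => A (fun j => z' (Sum.inl j)) i := by
    filter_upwards [mem_nhds_Omega hM hA hQ hF z hz] with z' hz'
    exact pd1_inr hM hA hQ hF z' hz' i
  rw [hev.fderiv_eq]
  have hAd : DifferentiableAt ℝ A (fun j => z (Sum.inl j)) :=
    (hA.contDiffAt (hM.mem_nhds hz)).differentiableAt (by simp)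
  have hπ : HasFDerivAt (fun z' : (Fin n ⊕ Fin (n+1)) → ℝ => (fun j => z' (Sum.inl j)))
      (projL n) z := (projL n).hasFDerivAt
  exact (((differentiableAt_pi.1 hAd) i).hasFDerivAt.comp z hπ).fderiv

lemma fderiv_pd1_inl_apply (z : (Fin n ⊕ Fin (n+1)) → ℝ) (hz : (fun j => z (Sum.inl j)) ∈ M)
    (k : Fin n) (i₀ : Fin (n+1)) :
    fderiv ℝ (pd1 F (Sum.inl k)) z (Pi.single (Sum.inr i₀) 1)
      = fderiv ℝ (fun v => A v i₀) (fun j => z (Sum.inl j)) (Pi.single k 1) := by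
  classical
  set u : Fin n → ℝ := fun j => z (Sum.inl j) with hu
  set W : Fin (n+1) → (Fin n → ℝ) → ℝ :=
    fun i v => fderiv ℝ (fun t => A t i) v (Pi.single k 1) with hW
  set wq : (Fin n → ℝ) → ℝ := fun v => fderiv ℝ Q v (Pi.single k 1) with hwq
  have hev : pd1 F (Sum.inl k) =ᶠ[nhds z]
      fun z' => (∑ i : Fin (n+1), W i (fun j => z' (Sum.inl j)) * z' (Sum.inr i))
        + wq (fun j => z' (Sum.inl j)) := by
    filter_upwards [mem_nhds_Omega hM hA hQ hF z hz] with z' hz'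
    exact pd1_inl hM hA hQ hF z' hz' k
  rw [hev.fderiv_eq]
  have hπ : HasFDerivAt (fun z' : (Fin n ⊕ Fin (n+1)) → ℝ => (fun j => z' (Sum.inl j)))
      (projL n) z := (projL n).hasFDerivAt
  have hAu : ContDiffAt ℝ (⊤ : ℕ∞) A u := hA.contDiffAt (hM.mem_nhds hz)
  have hWd : ∀ i, DifferentiableAt ℝ (W i) u := by
    intro i
    have h1 : ContDiffAt ℝ (⊤ : ℕ∞) (fun v => A v i) u := contDiffAt_pi.1 hAu i
    have h2 : ContDiffAt ℝ 1 (fderiv ℝ (fun v => A v i)) u :=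
      h1.fderiv_right (WithTop.coe_le_coe.2 le_top)
    exact (h2.differentiableAt one_ne_zero).clm_apply (differentiableAt_const _)
  have hwqd : DifferentiableAt ℝ wq u := by
    have h2 : ContDiffAt ℝ 1 (fderiv ℝ Q) u :=
      (hQ.contDiffAt (hM.mem_nhds hz)).fderiv_right (WithTop.coe_le_coe.2 le_top)
    exact (h2.differentiableAt one_ne_zero).clm_apply (differentiableAt_const _)
  have hg : HasFDerivAt
      (fun z' : (Fin n ⊕ Fin (n+1)) → ℝ =>
        (∑ i : Fin (n+1), W i (fun j => z' (Sum.inl j)) * z' (Sum.inr i))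
          + wq (fun j => z' (Sum.inl j)))
      ((∑ i : Fin (n+1),
          ((W i u) • ContinuousLinearMap.proj (Sum.inr i)
            + (z (Sum.inr i)) • ((fderiv ℝ (W i) u).comp (projL n))))
        + (fderiv ℝ wq u).comp (projL n)) z := by
    refine HasFDerivAt.add (HasFDerivAt.fun_sum fun i _ => ?_) ?_
    · have hc : HasFDerivAt (fun z' : (Fin n ⊕ Fin (n+1)) → ℝ => W i (fun j => z' (Sum.inl j)))
          ((fderiv ℝ (W i) u).comp (projL n)) z := by have := ((hWd i).hasFDerivAt).comp z hπ; exact this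
      have hd : HasFDerivAt (fun z' : (Fin n ⊕ Fin (n+1)) → ℝ => z' (Sum.inr i))
          (ContinuousLinearMap.proj (R := ℝ) (φ := fun _ : Fin n ⊕ Fin (n+1) => ℝ) (Sum.inr i)) z :=
        hasFDerivAt_apply (𝕜 := ℝ) (Sum.inr i) z
      exact hc.mul hd
    · exact (hwqd.hasFDerivAt).comp z hπ
  rw [hg.fderiv]
  simp [projL_single_inr, Pi.single_apply]
  rfl

end main2

/-- `A` is an immersion (its Jacobian has rank `n` everywhere on `M`)
iff `Hess F` has rank `2n` at every point of `M × ℝ^{n+1}`; and in that case the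
kernel of `Hess F` at each point is exactly the line spanned by `V`. -/
theorem stmt16 (n : ℕ) (hn : 1 ≤ n)
    (M : Set (Fin n → ℝ)) (hM : IsOpen M)
    (A : (Fin n → ℝ) → (Fin (n+1) → ℝ)) (hA : ContDiffOn ℝ (⊤ : ℕ∞) A M)
    (Q : (Fin n → ℝ) → ℝ) (hQ : ContDiffOn ℝ (⊤ : ℕ∞) Q M)
    (F : ((Fin n ⊕ Fin (n+1)) → ℝ) → ℝ)
    (hF : ∀ z, F z = (∑ i : Fin (n+1), A (fun j => z (Sum.inl j)) i * z (Sum.inr i))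
      + Q (fun j => z (Sum.inl j)))
    (V : (Fin n → ℝ) → ((Fin n ⊕ Fin (n+1)) → ℝ))
    (hV : ∀ u, V u = Sum.elim (0 : Fin n → ℝ)
      (fun i : Fin (n+1) => (-1 : ℝ) ^ (i : ℕ) * minorDel A i u)) :
    ((∀ u ∈ M, (Jac A u).rank = n) ↔
      (∀ z : (Fin n ⊕ Fin (n+1)) → ℝ, (fun j => z (Sum.inl j)) ∈ M →
        (hessM F z).rank = 2*n)) ∧
    ((∀ u ∈ M, (Jac A u).rank = n) →
      ∀ z : (Fin n ⊕ Fin (n+1)) → ℝ, (fun j => z (Sum.inl j)) ∈ M →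
        ∀ w : (Fin n ⊕ Fin (n+1)) → ℝ,
          (hessM F z *ᵥ w = 0 ↔ ∃ c : ℝ, w = c • V (fun j => z (Sum.inl j)))) := by
  have hent : ∀ z : (Fin n ⊕ Fin (n+1)) → ℝ, (fun j => z (Sum.inl j)) ∈ M →
      (∀ k i, hessM F z (Sum.inl k) (Sum.inr i) = Jac A (fun j => z (Sum.inl j)) i k)
      ∧ (∀ i i', hessM F z (Sum.inr i) (Sum.inr i') = 0)
      ∧ (∀ i k, hessM F z (Sum.inr i) (Sum.inl k) = Jac A (fun j => z (Sum.inl j)) i k) := by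
    intro z hz
    refine ⟨?_, ?_, ?_⟩
    · intro k i
      show fderiv ℝ (pd1 F (Sum.inr i)) z (Pi.single (Sum.inl k) 1)
        = Jac A (fun j => z (Sum.inl j)) i k
      rw [fderiv_pd1_inr hM hA hQ hF z hz i]
      simp [projL_single_inl]
      rfl
    · intro i i'
      show fderiv ℝ (pd1 F (Sum.inr i')) z (Pi.single (Sum.inr i) 1) = 0
      rw [fderiv_pd1_inr hM hA hQ hF z hz i']
      simp [projL_single_inr]
    · intro i k
      show fderiv ℝ (pd1 F (Sum.inl k)) z (Pi.single (Sum.inr i) 1)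
        = Jac A (fun j => z (Sum.inl j)) i k
      rw [fderiv_pd1_inl_apply hM hA hQ hF z hz k i]
      rfl
  refine ⟨⟨?_, ?_⟩, ?_⟩
  · intro hrk z hz
    obtain ⟨h1, h2, h3⟩ := hent z hz
    exact (hess_block (Jac A (fun j => z (Sum.inl j))) (hessM F z) h1 h2 h3).1 (hrk _ hz)
  · intro hH u hu
    have hz : (fun j => (Sum.elim u (0 : Fin (n+1) → ℝ)) (Sum.inl j)) ∈ M := hu
    obtain ⟨h1, h2, h3⟩ := hent (Sum.elim u 0) hz
    exact (hess_block (Jac A (fun j => (Sum.elim u (0 : Fin (n+1) → ℝ)) (Sum.inl j)))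
      (hessM F (Sum.elim u 0)) h1 h2 h3).2.1 (hH _ hz)
  · intro hrk z hz w
    obtain ⟨h1, h2, h3⟩ := hent z hz
    have hmain := (hess_block (Jac A (fun j => z (Sum.inl j))) (hessM F z) h1 h2 h3).2.2
      (hrk _ hz) w
    rw [hV]
    exact hmain
end

section
/- Let n ≥ 1, let M ⊆ ℝⁿ be open and connected, and let A : M → ℝ^{n+1} be a C^∞ map satisfying det[A(u) | dA(u)] = κ for all u ∈ M, where κ is a nonzero constant. Let dA^{(i)}(u) denote the determinant of the n×n matrix obtained from the Jacobian dA(u) by deleting its i-th row, and let W(u) ∈ ℝ^{n+1} be the vector with components (−1)^{i+1}·dA^{(i)}(u). Then W is constant on M if and only if the image of A is contained in an affine hyperplane of ℝ^{n+1}, i.e. if and only if there exists p ∈ ℝ^{n+1} with ⟨A(u), p⟩ = 1 for all u ∈ M (such a hyperplane necessarily does not pass through the origin, and one may take p = κ⁻¹·W). (This is the computational content of the statement that a level set of F(u,x) = ⟨A(u),x⟩ + Q(u) is an improper affine sphere exactly when the image of A lies in a hyperplane.) -/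
open Matrix

theorem expand_col {m : ℕ} (A : (Fin m → ℝ) → (Fin (m+1) → ℝ)) (u : Fin m → ℝ)
    (x : Fin (m+1) → ℝ) :
    (Matrix.of fun i j =>
      (Fin.cons x (fun k i' => Jac A u i' k) : Fin (m+1) → (Fin (m+1) → ℝ)) j i).det
    = ∑ i : Fin (m+1), (-1 : ℝ) ^ (i : ℕ) * x i * minorDel A i u := by
  rw [Matrix.det_succ_column_zero]
  refine Finset.sum_congr rfl fun i _ => ?_
  have h1 : (Matrix.of fun i j =>
      (Fin.cons x (fun k i' => Jac A u i' k) : Fin (m+1) → (Fin (m+1) → ℝ)) j i) i 0 = x i := by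
    simp
  have h2 : ((Matrix.of fun i j =>
      (Fin.cons x (fun k i' => Jac A u i' k) : Fin (m+1) → (Fin (m+1) → ℝ)) j i).submatrix
      i.succAbove Fin.succ).det = minorDel A i u := by
    unfold minorDel
    congr 1
  rw [h1, h2]

/-- for a centroaffine `A : M → ℝ^{n+1}` with `det[A | dA] ≡ κ ≠ 0` on a
connected open `M`, the vector `W` of signed maximal minors of the Jacobian of `A` is
constant on `M` iff the image of `A` lies in an affine hyperplane `⟨·, p⟩ = 1`; and if
`W ≡ w₀` one may take `p = κ⁻¹ w₀`. -/
theorem stmt18 (n : ℕ) (hn : 1 ≤ n)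
    (M : Set (Fin n → ℝ)) (hM : IsOpen M) (hMconn : IsConnected M)
    (A : (Fin n → ℝ) → (Fin (n+1) → ℝ)) (hA : ContDiffOn ℝ (⊤ : ℕ∞) A M)
    (κ : ℝ) (hκ : κ ≠ 0) (hAκ : ∀ u ∈ M, AdA A u = κ)
    (W : (Fin n → ℝ) → (Fin (n+1) → ℝ))
    (hW : ∀ u, W u = fun i : Fin (n+1) => (-1 : ℝ) ^ (i : ℕ) * minorDel A i u) :
    ((∃ w₀ : Fin (n+1) → ℝ, ∀ u ∈ M, W u = w₀) ↔
      (∃ p : Fin (n+1) → ℝ, ∀ u ∈ M, A u ⬝ᵥ p = 1)) ∧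
    (∀ w₀ : Fin (n+1) → ℝ, (∀ u ∈ M, W u = w₀) →
      ∀ u ∈ M, A u ⬝ᵥ (κ⁻¹ • w₀) = 1) := by
  -- ⟨A u, W u⟩ = AdA A u
  have hAW : ∀ u : Fin n → ℝ, A u ⬝ᵥ W u = AdA A u := by
    intro u
    rw [AdA, expand_col, hW]
    exact Finset.sum_congr rfl fun i _ => by ring
  have hκW : ∀ u ∈ M, A u ⬝ᵥ W u = κ := fun u hu => (hAW u).trans (hAκ u hu)
  -- W is orthogonal to every column of the Jacobian
  have horth : ∀ (u : Fin n → ℝ) (k : Fin n), (fun i => Jac A u i k) ⬝ᵥ W u = 0 := by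
    intro u k
    have h0 : (Matrix.of fun i j =>
        (Fin.cons (fun i => Jac A u i k) (fun k' i' => Jac A u i' k') :
          Fin (n+1) → (Fin (n+1) → ℝ)) j i).det = 0 := by
      apply Matrix.det_zero_of_column_eq (i := 0) (j := k.succ) (Fin.succ_ne_zero k).symm
      intro r; simp
    rw [expand_col] at h0
    rw [hW, ← h0]
    exact Finset.sum_congr rfl fun i _ => by ring
  -- differentiating ⟨A u, p⟩ = 1 kills the Jacobian columns against p
  have hpder : ∀ p : Fin (n+1) → ℝ, (∀ u ∈ M, A u ⬝ᵥ p = 1) → ∀ u ∈ M, ∀ k : Fin n,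
      ∑ i : Fin (n+1), Jac A u i k * p i = 0 := by
    intro p hp u hu k
    have hdiffA : DifferentiableAt ℝ A u :=
      (hA.contDiffAt (hM.mem_nhds hu)).differentiableAt (by simp)
    have h1 : ∀ i : Fin (n+1), DifferentiableAt ℝ (fun v => A v i) u := fun i =>
      ((ContinuousLinearMap.proj i : ((Fin (n+1)) → ℝ) →L[ℝ] ℝ).differentiable.differentiableAt).comp u hdiffA
    have heq : (fun v => ∑ i : Fin (n+1), A v i * p i) =ᶠ[nhds u] (fun _ => (1:ℝ)) := by
      filter_upwards [hM.mem_nhds hu] with v hv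
      simpa [dotProduct] using hp v hv
    have hf0 : fderiv ℝ (fun v => ∑ i : Fin (n+1), A v i * p i) u = 0 := by
      rw [heq.fderiv_eq]; exact fderiv_const_apply 1
    have hfs : fderiv ℝ (fun v => ∑ i : Fin (n+1), A v i * p i) u
        = ∑ i : Fin (n+1), p i • fderiv ℝ (fun v => A v i) u := by
      rw [fderiv_fun_sum (fun i _ => (h1 i).mul_const (p i))]
      exact Finset.sum_congr rfl fun i _ => fderiv_mul_const (h1 i) (p i)
    have hz := congrArg (fun L : (Fin n → ℝ) →L[ℝ] ℝ => L (Pi.single k 1)) (hf0.symm.trans hfs)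
    simp only [ContinuousLinearMap.zero_apply, ContinuousLinearMap.sum_apply,
      ContinuousLinearMap.smul_apply, smul_eq_mul] at hz
    calc ∑ i : Fin (n+1), Jac A u i k * p i
        = ∑ i : Fin (n+1), p i * fderiv ℝ (fun v => A v i) u (Pi.single k 1) :=
          Finset.sum_congr rfl fun i _ => mul_comm _ _
      _ = 0 := hz.symm
  -- main step: any hyperplane normal p forces W ≡ κ • p
  have hmain : ∀ p : Fin (n+1) → ℝ, (∀ u ∈ M, A u ⬝ᵥ p = 1) → ∀ u ∈ M, W u = κ • p := by
    intro p hp u hu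
    set C : Matrix (Fin (n+1)) (Fin (n+1)) ℝ :=
      Matrix.of (Fin.cons (A u) (fun k i' => Jac A u i' k)) with hC
    have hdet : C.det = κ := by
      rw [← Matrix.det_transpose]
      exact hAκ u hu
    have hunit : IsUnit C := by
      rw [Matrix.isUnit_iff_isUnit_det, hdet]; exact hκ.isUnit
    have hinj : Function.Injective C.mulVec := Matrix.mulVec_injective_iff_isUnit.mpr hunit
    apply hinj
    funext j
    induction j using Fin.cases with
    | zero =>
      show C 0 ⬝ᵥ W u = C 0 ⬝ᵥ (κ • p)
      have hrow0 : C 0 = A u := rfl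
      rw [hrow0, hκW u hu, dotProduct_smul, hp u hu, smul_eq_mul, mul_one]
    | succ k =>
      show C k.succ ⬝ᵥ W u = C k.succ ⬝ᵥ (κ • p)
      have hrows : C k.succ = fun i' => Jac A u i' k := rfl
      have h2 : (fun i' => Jac A u i' k) ⬝ᵥ p = 0 := hpder p hp u hu k
      rw [hrows, horth u k, dotProduct_smul, h2, smul_zero]
  constructor
  · constructor
    · rintro ⟨w₀, hw₀⟩
      refine ⟨κ⁻¹ • w₀, fun u hu => ?_⟩
      rw [dotProduct_smul, ← hw₀ u hu, hκW u hu, smul_eq_mul, inv_mul_cancel₀ hκ]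
    · rintro ⟨p, hp⟩
      exact ⟨κ • p, fun u hu => hmain p hp u hu⟩
  · intro w₀ hw₀ u hu
    rw [dotProduct_smul, ← hw₀ u hu, hκW u hu, smul_eq_mul, inv_mul_cancel₀ hκ]
end

section
/- Let n ≥ 1, let A : ℝⁿ → ℝ^{n+1} be a C^∞ map with components a¹,…,a^{n+1} satisfying det[A(u) | dA(u)] = κ for all u, where κ is a nonzero constant, let Q ∈ C^∞(ℝⁿ), and define F : ℝⁿ × ℝ^{n+1} → ℝ by F(u,x) = Σ_{i=1}^{n+1} aⁱ(u)·xᵢ + Q(u). Define Φ : ℝ × ℝⁿ × ℝⁿ → ℝⁿ × ℝ^{n+1} by Φ(t,r,s) = (r¹,…,rⁿ, c¹(t,r,s),…,c^{n+1}(t,r,s)), where cⁱ(t,r,s) = (−1)^{i+1}·κ⁻¹·(t − Q(r))·dA^{(i)}(r) + eⁱ(t,r,s), with e¹ = s¹·a²(r), e^{n+1} = −sⁿ·aⁿ(r), and eⁱ = −s^{i−1}·a^{i−1}(r) + sⁱ·a^{i+1}(r) for 2 ≤ i ≤ n, and where dA^{(i)}(r) is the determinant of the n×n matrix obtained from the Jacobian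 dA(r) by deleting its i-th row. Then F(Φ(t,r,s)) = t for all (t,r,s) ∈ ℝ × ℝⁿ × ℝⁿ; in particular, for each t, Φ(t,·,·) maps ℝⁿ × ℝⁿ into the level set { (u,x) : F(u,x) = t }. -/
open Matrix

theorem cofactorAdA {m : ℕ} (A : (Fin m → ℝ) → (Fin (m+1) → ℝ)) (u : Fin m → ℝ) :
    AdA A u = ∑ i : Fin (m+1), (-1:ℝ)^(i:ℕ) * A u i * minorDel A i u := by
  unfold AdA
  rw [Matrix.det_succ_column_zero]
  refine Finset.sum_congr rfl fun i _ => ?_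
  simp only [Matrix.of_apply, Fin.cons_zero]
  have hm : ((Matrix.of fun i j =>
      (Fin.cons (A u) (fun k i' => Jac A u i' k) : Fin (m+1) → (Fin (m+1) → ℝ)) j i).submatrix
        i.succAbove Fin.succ) = (Jac A u).submatrix i.succAbove id := by
    ext i' kk
    simp [Fin.cons_succ]
  rw [hm]
  rfl


/-- explicit parameterization of the level sets of
`F(u,x) = ⟨A(u),x⟩ + Q(u)` when `det[A | dA] ≡ κ ≠ 0`: the map `Φ(t,r,s)` with
`u`-part `r` and `x`-part `c(t,r,s)` given by the signed-minor and telescoping terms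
satisfies `F(Φ(t,r,s)) = t`, so for each `t` it maps into the level set `{F = t}`.
(Indices here are 0-based: the paper's 1-based `(−1)^{i+1} dA^{(i)}`, `s^i`, `a^i`
correspond to `(−1)^k · minorDel A k`, `s (k)`, `A r k` with `k = i − 1`.) -/
theorem stmt19 (n : ℕ) (hn : 1 ≤ n)
    (A : (Fin n → ℝ) → (Fin (n+1) → ℝ)) (hA : ContDiff ℝ (⊤ : ℕ∞) A)
    (κ : ℝ) (hκ : κ ≠ 0) (hAκ : ∀ u, AdA A u = κ)
    (Q : (Fin n → ℝ) → ℝ) (hQ : ContDiff ℝ (⊤ : ℕ∞) Q)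
    (F : ((Fin n ⊕ Fin (n+1)) → ℝ) → ℝ)
    (hF : ∀ z, F z = (∑ i : Fin (n+1), A (fun j => z (Sum.inl j)) i * z (Sum.inr i))
      + Q (fun j => z (Sum.inl j))) :
    ∀ (t : ℝ) (r s : Fin n → ℝ),
      F (Sum.elim r (fun k : Fin (n+1) =>
        (-1 : ℝ) ^ (k : ℕ) * κ⁻¹ * (t - Q r) * minorDel A k r
          + ((if hk : (k : ℕ) < n
              then s ⟨(k : ℕ), hk⟩ * A r ⟨(k : ℕ) + 1, by omega⟩
              else 0)
            - (if hk : 0 < (k : ℕ)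
              then s ⟨(k : ℕ) - 1, by have := k.isLt; omega⟩
                * A r ⟨(k : ℕ) - 1, by have := k.isLt; omega⟩
              else 0)))) = t := by
  intro t r s
  rw [hF]
  simp only [Sum.elim_inl, Sum.elim_inr]
  have hcof : ∑ i : Fin (n+1), (-1:ℝ)^(i:ℕ) * A r i * minorDel A i r = κ := by
    rw [← cofactorAdA, hAκ]
  have hsplit : ∀ k : Fin (n+1),
      A r k * ((-1 : ℝ) ^ (k : ℕ) * κ⁻¹ * (t - Q r) * minorDel A k r
        + ((if hk : (k : ℕ) < n
              then s ⟨(k : ℕ), hk⟩ * A r ⟨(k : ℕ) + 1, by omega⟩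
              else 0)
            - (if hk : 0 < (k : ℕ)
              then s ⟨(k : ℕ) - 1, by have := k.isLt; omega⟩
                * A r ⟨(k : ℕ) - 1, by have := k.isLt; omega⟩
              else 0)))
      = κ⁻¹ * (t - Q r) * ((-1:ℝ)^(k:ℕ) * A r k * minorDel A k r)
        + ((if hk : (k : ℕ) < n
              then A r k * (s ⟨(k : ℕ), hk⟩ * A r ⟨(k : ℕ) + 1, by omega⟩)
              else 0)
            - (if hk : 0 < (k : ℕ)
              then A r k * (s ⟨(k : ℕ) - 1, by have := k.isLt; omega⟩
                * A r ⟨(k : ℕ) - 1, by have := k.isLt; omega⟩)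
              else 0)) := by
    intro k
    by_cases h1 : (k:ℕ) < n <;> by_cases h2 : 0 < (k:ℕ) <;>
      simp [h1, h2] <;> ring
  rw [Finset.sum_congr rfl fun k _ => hsplit k]
  rw [Finset.sum_add_distrib, Finset.sum_sub_distrib, ← Finset.mul_sum, hcof]
  have hL : (∑ k : Fin (n+1), if hk : (k : ℕ) < n
        then A r k * (s ⟨(k : ℕ), hk⟩ * A r ⟨(k : ℕ) + 1, by omega⟩)
        else 0)
      = ∑ i : Fin n, A r i.castSucc * (s i * A r i.succ) := by
    rw [Fin.sum_univ_castSucc]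
    rw [dif_neg (by simp)]
    rw [add_zero]
    refine Finset.sum_congr rfl fun i _ => ?_
    rw [dif_pos (by simp [Fin.is_lt])]
    congr 1
  have hR : (∑ k : Fin (n+1), if hk : 0 < (k : ℕ)
        then A r k * (s ⟨(k : ℕ) - 1, by have := k.isLt; omega⟩
          * A r ⟨(k : ℕ) - 1, by have := k.isLt; omega⟩)
        else 0)
      = ∑ i : Fin n, A r i.succ * (s i * A r i.castSucc) := by
    rw [Fin.sum_univ_succ]
    rw [dif_neg (by simp)]
    rw [zero_add]
    refine Finset.sum_congr rfl fun i _ => ?_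
    rw [dif_pos (by simp)]
    congr 1
  rw [hL, hR]
  have : (∑ i : Fin n, A r i.castSucc * (s i * A r i.succ))
      = ∑ i : Fin n, A r i.succ * (s i * A r i.castSucc) := by
    refine Finset.sum_congr rfl fun i _ => by ring
  rw [this]
  field_simp
  ring
end
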